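/- Let C be a 2-club cover of a graph G, let y be a cut vertex with a component A of G − y such that A ∪ {y} induces a 2-club, and let B = V(G) ∖ (A ∪ {y}). For every set S in C, the induced subgraph G[S ∩ (B ∪ {y})] is a 2-club. -/

import Mathlib

open SimpleGraph

/-- `H` is obtained from `G` by splitting vertex `v` into two copies `v` and `v'`
(where `v'` was an isolated vertex), with `N(v₁) ∪ N(v₂) = N(v)`. -/
def IsSplitAt {V : Type*} (v v' : V) (G H : SimpleGraph V) : Prop :=
  v ≠ v' ∧ G.neighborSet v' = ∅ ∧ ¬ H.Adj v v' ∧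
  (∀ x y : V, x ≠ v → x ≠ v' → y ≠ v → y ≠ v' → (H.Adj x y ↔ G.Adj x y)) ∧
  (∀ x : V, x ≠ v → x ≠ v' → ((H.Adj v x ∨ H.Adj v' x) ↔ G.Adj v x))

/-- `H` is obtained from `G` by a single vertex split. -/
def IsSplit {V : Type*} (G H : SimpleGraph V) : Prop :=
  ∃ v v', IsSplitAt v v' G H

/-- `H` is obtained from `G` by deleting a single (existing) edge. -/
def IsEdgeDeletion {V : Type*} (G H : SimpleGraph V) : Prop :=
  ∃ u v : V, G.Adj u v ∧ H = G.deleteEdges {s(u, v)}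

/-- Editing operations: edge deletion, or vertex split (recording the split vertex
and the name of the new copy). -/
inductive Op where
  | del : ℕ → ℕ → Op
  | split : ℕ → ℕ → Op

/-- Semantics of one operation. -/
def OpApplies : Op → SimpleGraph ℕ → SimpleGraph ℕ → Prop
  | Op.del u v, G, H => G.Adj u v ∧ H = G.deleteEdges {s(u, v)}
  | Op.split v v', G, H => IsSplitAt v v' G H

/-- Applying a list of operations in order. -/
def OpsApply : List Op → SimpleGraph ℕ → SimpleGraph ℕ → Prop
  | [], G, H => H = G
  | o :: l, G, H => ∃ G', OpApplies o G G' ∧ OpsApply l G' H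

def IsSplitOp : Op → Prop
  | Op.split _ _ => True
  | Op.del _ _ => False

/-- The set of vertices on which a split is performed in the list of operations. -/
def splitVerts (l : List Op) : Set ℕ := {v | ∃ v', Op.split v v' ∈ l}

/-- `G` is a disjoint union of 2-clubs: within each connected component all
distances are at most 2. -/
def Is2ClubGraph (G : SimpleGraph ℕ) : Prop :=
  ∀ u v : ℕ, G.Reachable u v → G.dist u v ≤ 2

/-- Minimum number of vertex splits turning `G` into a disjoint union of 2-clubs. -/
noncomputable def twoCcvs (G : SimpleGraph ℕ) : ℕ :=
  sInf {k | ∃ l H, l.length = k ∧ (∀ o ∈ l, IsSplitOp o) ∧ OpsApply l G H ∧ Is2ClubGraph H}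

/-- Minimum number of edge deletions and vertex splits turning `G` into a
disjoint union of 2-clubs. -/
noncomputable def twoCcedvs (G : SimpleGraph ℕ) : ℕ :=
  sInf {k | ∃ l H, l.length = k ∧ OpsApply l G H ∧ Is2ClubGraph H}

/-- The subgraph of `G` induced on `s` (kept on the same vertex type, all
vertices outside `s` becoming isolated). -/
def inducedOn (G : SimpleGraph ℕ) (s : Set ℕ) : SimpleGraph ℕ where
  Adj x y := G.Adj x y ∧ x ∈ s ∧ y ∈ s
  symm := ⟨fun x y h => ⟨h.1.symm, h.2.2, h.2.1⟩⟩
  loopless := ⟨fun x h => G.irrefl h.1⟩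

/-- The set `s` induces a 2-club in `G` (connected, diameter at most 2). -/
def Inducing2Club (G : SimpleGraph ℕ) (s : Set ℕ) : Prop :=
  ∀ u ∈ s, ∀ v ∈ s, (inducedOn G s).Reachable u v ∧ (inducedOn G s).dist u v ≤ 2

/-- The path with vertices `0, 1, …, m` (length `m`). -/
def pathG (m : ℕ) : SimpleGraph ℕ :=
  SimpleGraph.fromRel (fun i j => j = i + 1 ∧ j ≤ m)

/-- The cycle with vertices `0, 1, …, n-1`. -/
def cycleG (n : ℕ) : SimpleGraph ℕ :=
  SimpleGraph.fromRel (fun i j => i < n ∧ j = (i + 1) % n)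

/-- Total cost of a 2-club cover: each vertex pays (multiplicity − 1), each edge
not contained in some set of the cover pays 1. -/
noncomputable def coverCost (G : SimpleGraph ℕ) (C : Finset (Finset ℕ)) : ℕ :=
  (∑ v ∈ C.sup id, ((C.filter (fun S => v ∈ S)).card - 1)) +
    Set.ncard {e : Sym2 ℕ | e ∈ G.edgeSet ∧ ¬ ∃ S ∈ C, ∀ x ∈ e, x ∈ S}

/-- `C` is a 2-club cover of `G`: it covers the vertices of `G` and each set
induces a 2-club. -/
def Is2ClubCover (G : SimpleGraph ℕ) (C : Finset (Finset ℕ)) : Prop :=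
  (∀ v ∈ G.support, ∃ S ∈ C, v ∈ S) ∧ ∀ S ∈ C, Inducing2Club G (↑S : Set ℕ)

theorem stmt9 (G : SimpleGraph ℕ) (y : ℕ) (A : Set ℕ)
    (hA : ∃ a ∈ A, a ≠ y ∧ A = {x | (inducedOn G {z | z ≠ y}).Reachable a x})
    (h2club : Inducing2Club G (A ∪ {y}))
    (C : Finset (Finset ℕ)) (hC : Is2ClubCover G C) :
    ∀ S ∈ C, Inducing2Club G ((↑S : Set ℕ) ∩ ({x | x ∉ A ∧ x ≠ y} ∪ {y})) := by
  obtain ⟨a, haA, hay, hAeq⟩ := hA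
  have hnyA : y ∉ A := by
    rw [hAeq]
    intro hr
    obtain ⟨w⟩ := hr.symm
    cases w with
    | nil => exact hay rfl
    | cons h _ => exact h.2.1 rfl
  have hedge : ∀ m ∈ A, ∀ z, G.Adj m z → z ≠ y → z ∈ A := by
    intro m hm z hadj hzy
    have hmy : m ≠ y := fun h => hnyA (h ▸ hm)
    rw [hAeq] at hm ⊢
    exact hm.trans (SimpleGraph.Adj.reachable ⟨hadj, hmy, hzy⟩)
  intro S hS u hu v hv
  set T : Set ℕ := (↑S : Set ℕ) ∩ ({x | x ∉ A ∧ x ≠ y} ∪ {y}) with hT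
  obtain ⟨hre, hd⟩ := hC.2 S hS u hu.1 v hv.1
  obtain ⟨p, hp, hlen⟩ := hre.exists_path_of_dist
  have hlen2 : p.length ≤ 2 := hlen ▸ hd
  cases p with
  | nil =>
    refine ⟨Reachable.refl u, ?_⟩
    rw [SimpleGraph.dist_self]
    omega
  | cons h q =>
    rename_i m
    cases q with
    | nil =>
      have h' : (inducedOn G T).Adj u v := ⟨h.1, hu, hv⟩
      refine ⟨h'.reachable, ?_⟩
      calc (inducedOn G T).dist u v ≤ (h'.toWalk).length := SimpleGraph.dist_le _
        _ ≤ 2 := by simp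
    | cons h2 q2 =>
      cases q2 with
      | cons h3 q3 => simp [SimpleGraph.Walk.length_cons] at hlen2
      | nil =>
        have huv : u ≠ v := by
          intro he
          subst he
          simp [SimpleGraph.dist_self] at hlen
        have hmS : m ∈ (↑S : Set ℕ) := h.2.2
        have hmT : m ∈ T := by
          by_cases hmy : m = y
          · exact ⟨hmS, Or.inr hmy⟩
          · refine ⟨hmS, Or.inl ⟨?_, hmy⟩⟩
            intro hmA
            rcases hu.2 with hu2 | huy
            · exact hu2.1 (hedge m hmA u h.1.symm hu2.2)
            · have huy' : u = y := huy
              have hvy : v ≠ y := by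
                intro hvy
                exact huv (huy'.trans hvy.symm)
              have hvnA : v ∉ A := by
                rcases hv.2 with hv2 | hv2
                · exact hv2.1
                · exact absurd hv2 hvy
              exact hvnA (hedge m hmA v h2.1 hvy)
        have e1 : (inducedOn G T).Adj u m := ⟨h.1, hu, hmT⟩
        have e2 : (inducedOn G T).Adj m v := ⟨h2.1, hmT, hv⟩
        refine ⟨e1.reachable.trans e2.reachable, ?_⟩
        calc (inducedOn G T).dist u v
            ≤ (SimpleGraph.Walk.cons e1 (SimpleGraph.Walk.cons e2 SimpleGraph.Walk.nil)).length :=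
              SimpleGraph.dist_le _
          _ ≤ 2 := by simp
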